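/- Let Q be a right rooted quiver. If a representation E of Q by left R-modules satisfies: (i) E(v) is an injective R-module for every vertex v, and (ii) for every vertex v the induced map E(v) → ∏_{s(a)=v} E(t(a)) is a split epimorphism, then E is an injective object of (Q, R-Mod). -/

import Mathlib

open CategoryTheory

/-- A quiver is right rooted if it contains no infinite path `• → • → • → ⋯`. -/
def RightRooted (Q : Type) [Quiver Q] : Prop :=
  ∀ vtx : ℕ → Q, IsEmpty (∀ n : ℕ, vtx n ⟶ vtx (n + 1))

/-- The canonical morphism `E(v) → ∏_{s(a)=v} E(t(a))` induced by the maps `E(a)`. -/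
noncomputable def canonicalSourceMap (Q : Type) [Quiver Q] (R : Type) [Ring R]
    (X : Paths Q ⥤ ModuleCat R) (v : Q) :
    X.obj ((Paths.of Q).obj v) →ₗ[R] ((a : Σ w : Q, v ⟶ w) → X.obj ((Paths.of Q).obj a.1)) :=
  LinearMap.pi fun a => (X.map ((Paths.of Q).map a.2)).hom

section Aux

variable {Q : Type} [Quiver Q] {R : Type} [Ring R]

/-- The relation "w is the target of an arrow out of v". -/
def RRel (Q : Type) [Quiver Q] : Q → Q → Prop := fun w v => Nonempty (v ⟶ w)

theorem RRel.wf (hQ : RightRooted Q) : WellFounded (RRel Q) := by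
  constructor
  intro x
  by_contra hx
  have H : ∀ p : {a : Q // ¬Acc (RRel Q) a}, ∃ q : {a : Q // ¬Acc (RRel Q) a},
      RRel Q q.1 p.1 := by
    rintro ⟨a, ha⟩
    obtain ⟨b, hb, hr⟩ := exists_not_acc_lt_of_not_acc ha
    exact ⟨⟨b, hb⟩, hr⟩
  choose F hF using H
  set vtx : ℕ → Q := fun n => (F^[n] ⟨x, hx⟩).1 with hvtx
  refine (hQ vtx).false fun n => ?_
  have : RRel Q (vtx (n + 1)) (vtx n) := by
    have := hF (F^[n] ⟨x, hx⟩)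
    simpa [hvtx, Function.iterate_succ_apply'] using this
  exact this.some

variable (E X Y : Paths Q ⥤ ModuleCat R) (g : X ⟶ E) (f : X ⟶ Y)

/-- The map `Y(v) → ∏_{a : v ⟶ w} E(w)` built from previously constructed extensions. -/
noncomputable def philMap (v : Q)
    (prev : ∀ w, RRel Q w v → (Y.obj ((Paths.of Q).obj w) →ₗ[R] E.obj ((Paths.of Q).obj w))) :
    Y.obj ((Paths.of Q).obj v) →ₗ[R] ((a : Σ w : Q, v ⟶ w) → E.obj ((Paths.of Q).obj a.1)) :=
  LinearMap.pi fun a => (prev a.1 ⟨a.2⟩) ∘ₗ (Y.map ((Paths.of Q).map a.2)).hom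

theorem exists_ext
    (hf : ∀ v : Paths Q, Function.Injective (f.app v))
    (h1 : ∀ v : Q, Module.Injective R (E.obj ((Paths.of Q).obj v)))
    (h2 : ∀ v : Q, ∃ s : ((a : Σ w : Q, v ⟶ w) → E.obj ((Paths.of Q).obj a.1)) →ₗ[R]
        E.obj ((Paths.of Q).obj v),
      (canonicalSourceMap Q R E v) ∘ₗ s = LinearMap.id)
    (v : Q)
    (prev : ∀ w, RRel Q w v →
      {gw : Y.obj ((Paths.of Q).obj w) →ₗ[R] E.obj ((Paths.of Q).obj w) //
        gw ∘ₗ (f.app ((Paths.of Q).obj w)).hom = (g.app ((Paths.of Q).obj w)).hom}) :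
    ∃ gv : Y.obj ((Paths.of Q).obj v) →ₗ[R] E.obj ((Paths.of Q).obj v),
      gv ∘ₗ (f.app ((Paths.of Q).obj v)).hom = (g.app ((Paths.of Q).obj v)).hom ∧
      (canonicalSourceMap Q R E v) ∘ₗ gv = philMap E Y v (fun w h => (prev w h).1) := by
  obtain ⟨s, hs⟩ := h2 v
  set c := canonicalSourceMap Q R E v with hc
  set φ := philMap E Y v (fun w h => (prev w h).1) with hφ
  have hsx : ∀ z, c (s z) = z := fun z => LinearMap.congr_fun hs z
  have compat : ∀ x, c ((g.app ((Paths.of Q).obj v)) x) = φ ((f.app ((Paths.of Q).obj v)) x) := by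
    intro x
    funext a
    have hnatg := g.naturality ((Paths.of Q).map a.2)
    have hnatf := f.naturality ((Paths.of Q).map a.2)
    have hprev := fun z => LinearMap.congr_fun (prev a.1 ⟨a.2⟩).2 z
    have hg : (g.app ((Paths.of Q).obj a.1)) ((X.map ((Paths.of Q).map a.2)) x)
        = (E.map ((Paths.of Q).map a.2)) ((g.app ((Paths.of Q).obj v)) x) :=
      congrArg (fun (m : X.obj ((Paths.of Q).obj v) ⟶ E.obj ((Paths.of Q).obj a.1)) => m x) hnatg
    have hfx : (f.app ((Paths.of Q).obj a.1)) ((X.map ((Paths.of Q).map a.2)) x)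
        = (Y.map ((Paths.of Q).map a.2)) ((f.app ((Paths.of Q).obj v)) x) :=
      congrArg (fun (m : X.obj ((Paths.of Q).obj v) ⟶ Y.obj ((Paths.of Q).obj a.1)) => m x) hnatf
    have hprev' : ∀ z, (prev a.1 ⟨a.2⟩).1 ((f.app ((Paths.of Q).obj a.1)) z)
        = (g.app ((Paths.of Q).obj a.1)) z := fun z => hprev z
    simp only [hc, hφ, canonicalSourceMap, philMap, LinearMap.pi_apply, LinearMap.comp_apply]
    rw [← hg, ← hprev' ((X.map ((Paths.of Q).map a.2)) x), hfx]
  obtain ⟨h, hh⟩ := (h1 v).out (f.app ((Paths.of Q).obj v)).hom (hf ((Paths.of Q).obj v))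
    ((g.app ((Paths.of Q).obj v)).hom - s ∘ₗ φ ∘ₗ (f.app ((Paths.of Q).obj v)).hom)
  refine ⟨s ∘ₗ φ + (LinearMap.id - s ∘ₗ c) ∘ₗ h, ?_, ?_⟩
  · apply LinearMap.ext; intro x
    have h1x : h ((f.app ((Paths.of Q).obj v)) x) = (g.app ((Paths.of Q).obj v)) x
        - s (φ ((f.app ((Paths.of Q).obj v)) x)) := hh x
    simp only [LinearMap.comp_apply, LinearMap.add_apply, LinearMap.sub_apply,
      LinearMap.id_apply]
    rw [h1x]
    have hz : c ((g.app ((Paths.of Q).obj v)) x - s (φ ((f.app ((Paths.of Q).obj v)) x))) = 0 := by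
      rw [map_sub, hsx, compat, sub_self]
    rw [hz, map_zero, sub_zero]
    abel
  · apply LinearMap.ext; intro y
    simp only [LinearMap.comp_apply, LinearMap.add_apply, LinearMap.sub_apply,
      LinearMap.id_apply, map_add, map_sub, hsx]
    abel

end Aux

section Aux2

variable {Q : Type} [Quiver Q] {R : Type} [Ring R]
variable (E X Y : Paths Q ⥤ ModuleCat R) (g : X ⟶ E) (f : X ⟶ Y)
variable (hf : ∀ v : Paths Q, Function.Injective (f.app v))
variable (h1 : ∀ v : Q, Module.Injective R (E.obj ((Paths.of Q).obj v)))
variable (h2 : ∀ v : Q, ∃ s : ((a : Σ w : Q, v ⟶ w) → E.obj ((Paths.of Q).obj a.1)) →ₗ[R]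
      E.obj ((Paths.of Q).obj v),
    (canonicalSourceMap Q R E v) ∘ₗ s = LinearMap.id)

/-- One step of the transfinite construction. -/
noncomputable def extBody (v : Q)
    (prev : ∀ w, RRel Q w v →
      {gw : Y.obj ((Paths.of Q).obj w) →ₗ[R] E.obj ((Paths.of Q).obj w) //
        gw ∘ₗ (f.app ((Paths.of Q).obj w)).hom = (g.app ((Paths.of Q).obj w)).hom}) :
    {gv : Y.obj ((Paths.of Q).obj v) →ₗ[R] E.obj ((Paths.of Q).obj v) //
        gv ∘ₗ (f.app ((Paths.of Q).obj v)).hom = (g.app ((Paths.of Q).obj v)).hom} :=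
  ⟨(exists_ext E X Y g f hf h1 h2 v prev).choose,
   (exists_ext E X Y g f hf h1 h2 v prev).choose_spec.1⟩

variable (hwf : WellFounded (RRel Q))

/-- The extension, constructed by well-founded recursion on the vertices. -/
noncomputable def extFun : ∀ v : Q,
    {gv : Y.obj ((Paths.of Q).obj v) →ₗ[R] E.obj ((Paths.of Q).obj v) //
        gv ∘ₗ (f.app ((Paths.of Q).obj v)).hom = (g.app ((Paths.of Q).obj v)).hom} :=
  hwf.fix (extBody E X Y g f hf h1 h2)

theorem extFun_eq (v : Q) :
    extFun E X Y g f hf h1 h2 hwf v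
      = extBody E X Y g f hf h1 h2 v (fun w _ => extFun E X Y g f hf h1 h2 hwf w) :=
  hwf.fix_eq (extBody E X Y g f hf h1 h2) v

theorem extFun_spec (v : Q) :
    (canonicalSourceMap Q R E v) ∘ₗ (extFun E X Y g f hf h1 h2 hwf v).1
      = philMap E Y v (fun w _ => (extFun E X Y g f hf h1 h2 hwf w).1) := by
  rw [extFun_eq]
  exact (exists_ext E X Y g f hf h1 h2 v
    (fun w _ => extFun E X Y g f hf h1 h2 hwf w)).choose_spec.2

end Aux2

/-- Let `Q` be a right rooted quiver.  If a representation `E` of `Q` by left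
`R`-modules satisfies (i) `E(v)` is an injective `R`-module for every vertex `v`, and (ii) for
every vertex `v` the induced map `E(v) → ∏_{s(a)=v} E(t(a))` is a split epimorphism, then `E`
is an injective object of `(Q, R-Mod)`. -/
theorem rightRooted_source_injective
    (Q : Type) [Quiver Q] (hQ : RightRooted Q) (R : Type) [Ring R]
    (E : Paths Q ⥤ ModuleCat R)
    (h1 : ∀ v : Q, Module.Injective R (E.obj ((Paths.of Q).obj v)))
    (h2 : ∀ v : Q, ∃ s : ((a : Σ w : Q, v ⟶ w) → E.obj ((Paths.of Q).obj a.1)) →ₗ[R]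
        E.obj ((Paths.of Q).obj v),
      (canonicalSourceMap Q R E v) ∘ₗ s = LinearMap.id) :
    CategoryTheory.Injective E := by
  constructor
  intro X Y g f hmono
  have hf : ∀ v : Paths Q, Function.Injective (f.app v) := fun v =>
    (ModuleCat.mono_iff_injective (f.app v)).1 inferInstance
  have hwf : WellFounded (RRel Q) := RRel.wf hQ
  set G := extFun E X Y g f hf h1 h2 hwf with hG
  have single : ∀ (b w : Q) (a : b ⟶ w),
      Y.map ((Paths.of Q).map a) ≫ ModuleCat.ofHom (G w).1
        = (ModuleCat.ofHom (G b).1 : Y.obj ((Paths.of Q).obj b) ⟶ E.obj ((Paths.of Q).obj b))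
            ≫ E.map ((Paths.of Q).map a) := by
    intro b w a
    apply ModuleCat.hom_ext; apply LinearMap.ext; intro y
    have h0 := congrFun (LinearMap.congr_fun (extFun_spec E X Y g f hf h1 h2 hwf b) y)
      (⟨w, a⟩ : Σ w' : Q, b ⟶ w')
    simp only [hG]
    exact h0.symm
  refine ⟨{ app := fun v => ModuleCat.ofHom (G v).1, naturality := ?_ }, ?_⟩
  · intro v w p
    induction p using Paths.induction_fixed_source with
    | id => rw [CategoryTheory.Functor.map_id, CategoryTheory.Functor.map_id,
        Category.id_comp, Category.comp_id]
    | comp p q hp =>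
      rw [Functor.map_comp, Functor.map_comp, Category.assoc]
      erw [single]
      rw [← Category.assoc]
      erw [hp]
      rw [Category.assoc]
  · apply NatTrans.ext
    funext v
    exact ModuleCat.hom_ext (G v).2
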